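/- Suppose the Stein-log-Sobolev inequality with exponent α ≥ 1 holds, i.e. λ·[KL(ρ||ρ_∞)]^α ≤ D²(ρ||ρ_∞) for all admissible ρ, where V is γ-homogeneous with γ > 0, ∇V is (γ-1)-homogeneous, k is β-homogeneous with β < 0, K(x,y) = k(x-y), and the double integral ∫∫ ∇V(x)·k(x-y)∇V(y) dρ_∞(y) dρ_∞(x) is finite. Then evaluating at the dilated measures (S_λ)_# ρ_∞ with S_λ(x) = λx yields, as λ → ∞, the necessary condition α·γ ≤ β + 2(γ - 1). In particular, if (α-2)γ > β - 2, the inequality fails. -/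

import Mathlib

/-- Failure of the Stein-log-Sobolev inequality with exponent `α` for homogeneous data:
if `V` is `γ`-homogeneous (`γ > 0`), `k` is `β`-homogeneous (`β < 0`), and the
Stein-log-Sobolev inequality `λ [KL(ρ||ρ∞)]^α ≤ D²(ρ||ρ∞)` holds in particular along
the dilations `(S_l)_# ρ∞` — for which
`KL = (l^γ - 1)∫V dρ∞ - d ln l` and `D² = (l^γ-1)² l^{β-2} I` with
`I = ∫∫ ∇V(x)·k(x-y)∇V(y) dρ∞ dρ∞ < ∞` — then necessarily `αγ ≤ β + 2(γ-1)`;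
equivalently, the inequality fails whenever `(α-2)γ > β-2`. -/
theorem stmt19 (d : ℕ) (α γ β lam IV I : ℝ)
    (hα : 1 ≤ α) (hγ : 0 < γ) (hβ : β < 0) (hlam : 0 < lam)
    (hIV : 0 < IV) (hI : 0 ≤ I)
    (KL D2 : ℝ → ℝ)
    (hKL : ∀ l : ℝ, 0 < l → KL l = (l ^ γ - 1) * IV - d * Real.log l)
    (hD2 : ∀ l : ℝ, 0 < l → D2 l = (l ^ γ - 1) ^ 2 * l ^ (β - 2) * I)
    (hSLSI : ∀ l : ℝ, 0 < l → lam * (KL l) ^ α ≤ D2 l) :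
    α * γ ≤ β + 2 * (γ - 1) := by
  by_contra hcon
  push_neg at hcon
  set ε : ℝ := α * γ - (β + 2 * (γ - 1)) with hε
  have hεpos : 0 < ε := by simp only [hε]; linarith
  have h1 : Filter.Tendsto (fun l : ℝ => l ^ γ) Filter.atTop Filter.atTop :=
    tendsto_rpow_atTop hγ
  have hlog : (Real.log : ℝ → ℝ) =o[Filter.atTop] (fun l => l ^ γ) :=
    isLittleO_log_rpow_atTop hγ
  have hcpos : 0 < IV / (4 * (|(d : ℝ)| + 1)) := by positivity
  -- eventual bound: |d| |log l| ≤ (IV/4) l^γ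
  have h2 : ∀ᶠ l : ℝ in Filter.atTop, |(d : ℝ)| * |Real.log l| ≤ IV / 4 * l ^ γ := by
    filter_upwards [hlog.def hcpos, h1.eventually_ge_atTop 0] with l hl hl0
    rw [Real.norm_eq_abs, Real.norm_eq_abs, abs_of_nonneg hl0] at hl
    have key : (|(d : ℝ)| + 1) * (IV / (4 * (|(d : ℝ)| + 1))) = IV / 4 := by
      field_simp
    calc |(d : ℝ)| * |Real.log l| ≤ |(d : ℝ)| * (IV / (4 * (|(d : ℝ)| + 1)) * l ^ γ) :=
          mul_le_mul_of_nonneg_left hl (abs_nonneg _)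
      _ ≤ (|(d : ℝ)| + 1) * (IV / (4 * (|(d : ℝ)| + 1)) * l ^ γ) := by
          apply mul_le_mul_of_nonneg_right (by linarith) (by positivity)
      _ = IV / 4 * l ^ γ := by rw [← mul_assoc, key]
  have h3 : ∀ᶠ l : ℝ in Filter.atTop, IV ≤ IV / 4 * l ^ γ := by
    filter_upwards [h1.eventually_ge_atTop 4] with l hl
    nlinarith
  -- eventual lower bound for KL
  have hKLlb : ∀ᶠ l : ℝ in Filter.atTop, IV / 2 * l ^ γ ≤ KL l := by
    filter_upwards [h2, h3, Filter.eventually_gt_atTop 0] with l h2l h3l hl0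
    rw [hKL l hl0]
    have hd : (d : ℝ) * Real.log l ≤ |(d : ℝ)| * |Real.log l| := by
      calc (d : ℝ) * Real.log l ≤ |(d : ℝ) * Real.log l| := le_abs_self _
        _ = |(d : ℝ)| * |Real.log l| := abs_mul _ _
    linarith
  -- eventual bound l^ε ≤ C
  set C : ℝ := I / (lam * (IV / 2) ^ α) with hC
  have hbound : ∀ᶠ l : ℝ in Filter.atTop, l ^ ε ≤ C := by
    filter_upwards [hKLlb, Filter.eventually_ge_atTop 1] with l hKl hl1
    have hl0 : (0 : ℝ) < l := lt_of_lt_of_le one_pos hl1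
    have hlγ1 : (1 : ℝ) ≤ l ^ γ := by
      calc (1 : ℝ) = (1 : ℝ) ^ γ := (Real.one_rpow γ).symm
        _ ≤ l ^ γ := Real.rpow_le_rpow zero_le_one hl1 hγ.le
    have hlγ0 : (0 : ℝ) ≤ l ^ γ := by linarith
    have hαnn : (0 : ℝ) ≤ α := by linarith
    have step1 : lam * (IV / 2 * l ^ γ) ^ α ≤ lam * (KL l) ^ α :=
      mul_le_mul_of_nonneg_left
        (Real.rpow_le_rpow (by positivity) hKl hαnn) hlam.le
    have step2 : lam * (KL l) ^ α ≤ D2 l := hSLSI l hl0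
    have step3 : D2 l ≤ (l ^ γ) ^ 2 * l ^ (β - 2) * I := by
      rw [hD2 l hl0]
      have hb2 : (l ^ γ - 1) ^ 2 ≤ (l ^ γ) ^ 2 := by nlinarith
      have : (0:ℝ) ≤ l ^ (β - 2) := (Real.rpow_pos_of_pos hl0 _).le
      apply mul_le_mul_of_nonneg_right _ hI
      exact mul_le_mul_of_nonneg_right hb2 this
    have lhs_eq : lam * (IV / 2 * l ^ γ) ^ α = lam * (IV / 2) ^ α * l ^ (γ * α) := by
      rw [Real.mul_rpow (by positivity) hlγ0, ← Real.rpow_mul hl0.le, mul_assoc]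
    have rhs_eq : (l ^ γ) ^ 2 * l ^ (β - 2) * I = l ^ (β + 2 * (γ - 1)) * I := by
      rw [← Real.rpow_natCast (l ^ γ) 2, ← Real.rpow_mul hl0.le,
        ← Real.rpow_add hl0]
      norm_num
      left
      ring_nf
    have main : lam * (IV / 2) ^ α * l ^ (γ * α) ≤ l ^ (β + 2 * (γ - 1)) * I := by
      rw [← lhs_eq, ← rhs_eq]
      exact le_trans step1 (le_trans step2 step3)
    have hA : (0 : ℝ) < lam * (IV / 2) ^ α := by positivity
    have hlb : (0 : ℝ) < l ^ (β + 2 * (γ - 1)) := Real.rpow_pos_of_pos hl0 _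
    have hεeq : l ^ ε = l ^ (γ * α) / l ^ (β + 2 * (γ - 1)) := by
      rw [← Real.rpow_sub hl0]; simp only [hε]; ring_nf
    rw [hεeq, hC, div_le_div_iff₀ hlb hA]
    nlinarith [main, hlb.le]
  -- contradiction with l^ε → ∞
  have htop : Filter.Tendsto (fun l : ℝ => l ^ ε) Filter.atTop Filter.atTop :=
    tendsto_rpow_atTop hεpos
  have := (htop.eventually_gt_atTop C).and hbound
  obtain ⟨l, hl1, hl2⟩ := this.exists
  linarith
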